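/- Let ψ:(0,∞)→(0,∞) be non-decreasing with ∫₀^r s/ψ(s) ds < ∞ for every r>0, let Φ(r) := r²/(2∫₀^r s/ψ(s) ds), let a∈(0,∞), and let Φ̃_a(s) := (Φ(a)/a²)·s² for 0<s<a and Φ̃_a(s) := Φ(s) for s≥a. Then: (1) Φ̃_a(t) ≤ Φ(t) for every t>0, and for every c>0 and every t≥c, Φ̃_a(t) ≥ min((c/a)²,1)·Φ(t); (2) for all 0<s<t, Φ̃_a(t)/Φ̃_a(s) ≤ (t/s)²; (3) if Φ satisfies L^a(δ,C̃) with δ≤2 and C̃∈(0,1], then Φ̃_a satisfies the global condition L(δ,C̃). -/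

import Mathlib

open MeasureTheory Set

/-- With `Φ(r) = r²/(2∫₀^r s/ψ(s) ds)`, `a ∈ (0,∞)` and
`Φ̃_a(s) = (Φ(a)/a²) s²` for `0 < s < a`, `Φ̃_a(s) = Φ(s)` for `s ≥ a`:
(1) `Φ̃_a(t) ≤ Φ(t)` for all `t > 0`, and `Φ̃_a(t) ≥ min((c/a)², 1) Φ(t)` for `t ≥ c > 0`;
(2) `Φ̃_a(t)/Φ̃_a(s) ≤ (t/s)²` for `0 < s < t`;
(3) if `Φ` satisfies `L^a(δ, C̃)` with `δ ≤ 2`, then `Φ̃_a` satisfies the global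
condition `L(δ, C̃)`. -/
theorem stmt_10 (ψ Φ Φt : ℝ → ℝ)
    (hψ_pos : ∀ r : ℝ, 0 < r → 0 < ψ r)
    (hψ_mono : ∀ r s : ℝ, 0 < r → r ≤ s → ψ r ≤ ψ s)
    (hψ_int : ∀ r : ℝ, 0 < r → IntegrableOn (fun s => s / ψ s) (Ioo 0 r))
    (hΦ : ∀ r : ℝ, 0 < r → Φ r = r ^ 2 / (2 * ∫ s in Ioo (0:ℝ) r, s / ψ s))
    (a : ℝ) (ha : 0 < a)
    (hΦt₁ : ∀ s : ℝ, 0 < s → s < a → Φt s = Φ a / a ^ 2 * s ^ 2)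
    (hΦt₂ : ∀ s : ℝ, a ≤ s → Φt s = Φ s) :
    ((∀ t : ℝ, 0 < t → Φt t ≤ Φ t) ∧
      (∀ c t : ℝ, 0 < c → c ≤ t → min ((c / a) ^ 2) 1 * Φ t ≤ Φt t)) ∧
    (∀ s t : ℝ, 0 < s → s < t → Φt t / Φt s ≤ (t / s) ^ 2) ∧
    (∀ δ Cl : ℝ, 0 < δ → δ ≤ 2 → 0 < Cl → Cl ≤ 1 →
      (∀ r R : ℝ, a ≤ r → r ≤ R → Cl * (R / r) ^ δ ≤ Φ R / Φ r) →
      ∀ r R : ℝ, 0 < r → r ≤ R → Cl * (R / r) ^ δ ≤ Φt R / Φt r) := by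
  -- basic facts about the integral `I r = ∫ s in Ioo 0 r, s / ψ s`
  have hI_nn : ∀ r : ℝ, (0:ℝ→ℝ) ≤ᵐ[volume.restrict (Ioo 0 r)] fun s => s / ψ s := by
    intro r
    filter_upwards [ae_restrict_mem measurableSet_Ioo] with s hs
    exact div_nonneg hs.1.le (hψ_pos s hs.1).le
  have hI_pos : ∀ r : ℝ, 0 < r → 0 < ∫ s in Ioo (0:ℝ) r, s / ψ s := by
    intro r hr
    rw [MeasureTheory.setIntegral_pos_iff_support_of_nonneg_ae (hI_nn r) (hψ_int r hr)]
    have hsub : Ioo (0:ℝ) r ⊆ Function.support (fun s => s / ψ s) ∩ Ioo 0 r := fun s hs =>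
      ⟨ne_of_gt (div_pos hs.1 (hψ_pos s hs.1)), hs⟩
    calc (0:ENNReal) < volume (Ioo (0:ℝ) r) := by
          rw [Real.volume_Ioo]
          simpa using hr
      _ ≤ _ := measure_mono hsub
  have hI_mono : ∀ r R : ℝ, 0 < r → r ≤ R →
      (∫ s in Ioo (0:ℝ) r, s / ψ s) ≤ ∫ s in Ioo (0:ℝ) R, s / ψ s := by
    intro r R hr hrR
    exact setIntegral_mono_set (hψ_int R (hr.trans_le hrR)) (hI_nn R)
      ((Ioo_subset_Ioo le_rfl hrR).eventuallyLE)
  have hΦ_pos : ∀ r : ℝ, 0 < r → 0 < Φ r := by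
    intro r hr
    rw [hΦ r hr]
    have := hI_pos r hr
    positivity
  -- `Φ R * r² ≤ Φ r * R²` for `0 < r ≤ R`
  have hratio : ∀ r R : ℝ, 0 < r → r ≤ R → Φ R * r ^ 2 ≤ Φ r * R ^ 2 := by
    intro r R hr hrR
    have hR : 0 < R := hr.trans_le hrR
    rw [hΦ r hr, hΦ R hR]
    have h1 : (0:ℝ) < 2 * ∫ s in Ioo (0:ℝ) r, s / ψ s := by
      have := hI_pos r hr; linarith
    have h2 : (0:ℝ) < 2 * ∫ s in Ioo (0:ℝ) R, s / ψ s := by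
      have := hI_pos R hR; linarith
    rw [div_mul_eq_mul_div, div_mul_eq_mul_div, div_le_div_iff₀ h2 h1]
    have := hI_mono r R hr hrR
    nlinarith [mul_pos (pow_pos hr 2) (pow_pos hR 2)]
  -- monotonicity `Φ t ≤ Φ a` for `0 < t ≤ a`
  have hΦ_mono : ∀ t : ℝ, 0 < t → t ≤ a → Φ t ≤ Φ a := by
    intro t ht hta
    set It := ∫ s in Ioo (0:ℝ) t, s / ψ s with hIt
    have hψt : 0 < ψ t := hψ_pos t ht
    -- the function s ↦ s / ψ t is integrable on intervals
    have hconst : ∀ u v : ℝ, IntegrableOn (fun s => s / ψ t) (Ioo u v) :=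
      fun u v => ((continuous_id.div_const (ψ t)).integrableOn_Ioc).mono_set Ioo_subset_Ioc_self
    have hid : ∀ u v : ℝ, u ≤ v → (∫ s in Ioo u v, s / ψ t) = (v ^ 2 - u ^ 2) / (2 * ψ t) := by
      intro u v huv
      have : (∫ s in Ioo u v, s / ψ t) = (∫ s in Ioo u v, (s:ℝ)) / ψ t := integral_div _ _
      rw [this, ← MeasureTheory.integral_Ioc_eq_integral_Ioo,
        ← intervalIntegral.integral_of_le huv, integral_id]
      ring
    -- lower bound on It
    have hlow : t ^ 2 / (2 * ψ t) ≤ It := by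
      have hmono : ∀ s ∈ Ioo (0:ℝ) t, s / ψ t ≤ s / ψ s := by
        intro s hs
        exact div_le_div_of_nonneg_left hs.1.le (hψ_pos s hs.1) (hψ_mono s t hs.1 hs.2.le)
      have := setIntegral_mono_on (hconst 0 t) (hψ_int t ht) measurableSet_Ioo hmono
      rw [hid 0 t ht.le] at this
      have e : (t ^ 2 - 0 ^ 2) / (2 * ψ t) = t ^ 2 / (2 * ψ t) := by ring
      rw [e] at this
      exact this
    -- upper bound on the middle piece
    have hint_mid : IntegrableOn (fun s => s / ψ s) (Ioo t a) :=
      (hψ_int a ha).mono_set (Ioo_subset_Ioo ht.le le_rfl)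
    have hupp : (∫ s in Ioo t a, s / ψ s) ≤ (a ^ 2 - t ^ 2) / (2 * ψ t) := by
      have hmono : ∀ s ∈ Ioo t a, s / ψ s ≤ s / ψ t := by
        intro s hs
        have hs0 : 0 < s := ht.trans hs.1
        exact div_le_div_of_nonneg_left hs0.le hψt (hψ_mono t s ht hs.1.le)
      have := setIntegral_mono_on hint_mid (hconst t a) measurableSet_Ioo hmono
      rwa [hid t a hta] at this
    -- splitting of the integral
    have hsplit : (∫ s in Ioo (0:ℝ) a, s / ψ s) = It + ∫ s in Ioo t a, s / ψ s := by
      have h1 : IntegrableOn (fun s => s / ψ s) (Ioc 0 t) :=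
        (integrableOn_Ioc_iff_integrableOn_Ioo).2 (hψ_int t ht)
      have h2 : IntegrableOn (fun s => s / ψ s) (Ioc t a) :=
        (integrableOn_Ioc_iff_integrableOn_Ioo).2 hint_mid
      have hu : Ioc (0:ℝ) t ∪ Ioc t a = Ioc 0 a := Ioc_union_Ioc_eq_Ioc ht.le hta
      rw [← MeasureTheory.integral_Ioc_eq_integral_Ioo, ← hu,
        MeasureTheory.setIntegral_union (Ioc_disjoint_Ioc_of_le le_rfl) measurableSet_Ioc h1 h2,
        MeasureTheory.integral_Ioc_eq_integral_Ioo, MeasureTheory.integral_Ioc_eq_integral_Ioo]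
    -- combine
    rw [hΦ t ht, hΦ a ha, hsplit]
    have hItpos : 0 < It := hI_pos t ht
    have hD_nn : 0 ≤ ∫ s in Ioo t a, s / ψ s :=
      setIntegral_nonneg measurableSet_Ioo (fun s hs => div_nonneg (ht.trans hs.1).le
        (hψ_pos s (ht.trans hs.1)).le)
    rw [div_le_div_iff₀ (by linarith) (by positivity)]
    have key1 : t ^ 2 * (∫ s in Ioo t a, s / ψ s) ≤ t ^ 2 * ((a ^ 2 - t ^ 2) / (2 * ψ t)) :=
      mul_le_mul_of_nonneg_left hupp (sq_nonneg t)
    have key2 : (a ^ 2 - t ^ 2) * (t ^ 2 / (2 * ψ t)) ≤ (a ^ 2 - t ^ 2) * It :=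
      mul_le_mul_of_nonneg_left hlow (by nlinarith)
    have e : t ^ 2 * ((a ^ 2 - t ^ 2) / (2 * ψ t)) = (a ^ 2 - t ^ 2) * (t ^ 2 / (2 * ψ t)) := by
      ring
    nlinarith
  -- positivity of Φt
  have hΦt_pos : ∀ t : ℝ, 0 < t → 0 < Φt t := by
    intro t ht
    rcases lt_or_ge t a with h | h
    · rw [hΦt₁ t ht h]
      have := hΦ_pos a ha
      positivity
    · rw [hΦt₂ t h]
      exact hΦ_pos t ht
  -- (1a)
  have part1a : ∀ t : ℝ, 0 < t → Φt t ≤ Φ t := by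
    intro t ht
    rcases lt_or_ge t a with h | h
    · rw [hΦt₁ t ht h, div_mul_eq_mul_div, div_le_iff₀ (pow_pos ha 2)]
      have := hratio t a ht h.le
      linarith
    · rw [hΦt₂ t h]
  -- (1b)
  have part1b : ∀ c t : ℝ, 0 < c → c ≤ t → min ((c / a) ^ 2) 1 * Φ t ≤ Φt t := by
    intro c t hc hct
    have ht : 0 < t := hc.trans_le hct
    rcases lt_or_ge t a with h | h
    · have hca : c < a := lt_of_le_of_lt hct h
      have hmin : min ((c / a) ^ 2) 1 = (c / a) ^ 2 := by
        apply min_eq_left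
        have h1 : c / a ≤ 1 := (div_le_one ha).2 hca.le
        have h0 : 0 ≤ c / a := by positivity
        nlinarith
      rw [hmin, hΦt₁ t ht h, div_pow, div_mul_eq_mul_div, div_mul_eq_mul_div,
        div_le_div_iff₀ (pow_pos ha 2) (pow_pos ha 2)]
      have hkey : c ^ 2 * Φ t ≤ t ^ 2 * Φ a := by
        have h1 : c ^ 2 ≤ t ^ 2 := by nlinarith
        have h2 : Φ t ≤ Φ a := hΦ_mono t ht h.le
        nlinarith [hΦ_pos t ht, sq_nonneg t]
      nlinarith [pow_pos ha 2]
    · rw [hΦt₂ t h]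
      have h1 : min ((c / a) ^ 2) 1 ≤ 1 := min_le_right _ _
      nlinarith [hΦ_pos t ht]
  -- key comparison for (2)
  have hΦt_ratio : ∀ s t : ℝ, 0 < s → s ≤ t → Φt t * s ^ 2 ≤ Φt s * t ^ 2 := by
    intro s t hs hst
    have ht : 0 < t := hs.trans_le hst
    rcases lt_or_ge t a with h | h
    · have hsa : s < a := lt_of_le_of_lt hst h
      rw [hΦt₁ s hs hsa, hΦt₁ t ht h]
      have : Φ a / a ^ 2 * t ^ 2 * s ^ 2 = Φ a / a ^ 2 * s ^ 2 * t ^ 2 := by ring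
      rw [this]
    · rcases lt_or_ge s a with h2 | h2
      · rw [hΦt₁ s hs h2, hΦt₂ t h]
        rw [div_mul_eq_mul_div, div_mul_eq_mul_div, le_div_iff₀ (pow_pos ha 2)]
        have := hratio a t ha h
        nlinarith [sq_nonneg s]
      · rw [hΦt₂ s h2, hΦt₂ t h]
        exact hratio s t hs hst
  have part2 : ∀ s t : ℝ, 0 < s → s < t → Φt t / Φt s ≤ (t / s) ^ 2 := by
    intro s t hs hst
    rw [div_pow, div_le_div_iff₀ (hΦt_pos s hs) (pow_pos hs 2)]
    nlinarith [hΦt_ratio s t hs hst.le]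
  -- (3)
  have part3 : ∀ δ Cl : ℝ, 0 < δ → δ ≤ 2 → 0 < Cl → Cl ≤ 1 →
      (∀ r R : ℝ, a ≤ r → r ≤ R → Cl * (R / r) ^ δ ≤ Φ R / Φ r) →
      ∀ r R : ℝ, 0 < r → r ≤ R → Cl * (R / r) ^ δ ≤ Φt R / Φt r := by
    intro δ Cl hδ hδ2 hCl hCl1 hyp r R hr hrR
    have hR : 0 < R := hr.trans_le hrR
    have hx : (1:ℝ) ≤ R / r := (one_le_div hr).2 hrR
    rcases le_or_gt a r with h | h
    · rw [hΦt₂ r h, hΦt₂ R (h.trans hrR)]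
      exact hyp r R h hrR
    · rcases lt_or_ge R a with h2 | h2
      · -- both below a: ratio is exactly (R/r)²
        rw [hΦt₁ r hr h, hΦt₁ R hR h2]
        have hca : Φ a / a ^ 2 ≠ 0 := by
          have := hΦ_pos a ha; positivity
        rw [mul_div_mul_left _ _ hca, ← div_pow]
        calc Cl * (R / r) ^ δ ≤ 1 * (R / r) ^ δ :=
              mul_le_mul_of_nonneg_right hCl1 (Real.rpow_nonneg (by positivity) δ)
          _ = (R / r) ^ δ := one_mul _
          _ ≤ (R / r) ^ (2:ℝ) := Real.rpow_le_rpow_of_exponent_le hx hδ2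
          _ = (R / r) ^ 2 := Real.rpow_two _
      · -- r < a ≤ R
        have hΦa := hΦ_pos a ha
        have hΦR := hΦ_pos R (ha.trans_le h2)
        have hy : (1:ℝ) ≤ a / r := (one_le_div hr).2 h.le
        have hsplit : (R / r) ^ δ = (R / a) ^ δ * (a / r) ^ δ := by
          rw [← Real.mul_rpow (by positivity) (by positivity)]
          congr 1
          field_simp
        have key1 : Cl * (R / a) ^ δ ≤ Φ R / Φ a := hyp a R le_rfl h2
        have key2 : (a / r) ^ δ ≤ (a / r) ^ 2 := by
          rw [← Real.rpow_two]
          exact Real.rpow_le_rpow_of_exponent_le hy hδ2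
        have step : Cl * (R / r) ^ δ ≤ Φ R / Φ a * (a / r) ^ 2 := by
          rw [hsplit, ← mul_assoc]
          exact mul_le_mul key1 key2 (Real.rpow_nonneg (by positivity) δ)
            (by positivity)
        refine step.trans (le_of_eq ?_)
        rw [hΦt₂ R h2, hΦt₁ r hr h]
        field_simp
  exact ⟨⟨part1a, part1b⟩, part2, part3⟩
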